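/- Let G be a finite simple graph with maximum degree at most Δ (Δ ≥ 1), let v be a vertex of G, and let ℓ ≥ 2 be a natural number. Then the number of vertex subsets S of size ℓ containing v whose induced subgraph G[S] is connected is at most (e·Δ²)^(ℓ−1)/2. -/

import Mathlib

open SimpleGraph Finset

private lemma walk_count_le {V : Type*} [Fintype V] [DecidableEq V] (G : SimpleGraph V)
    [DecidableRel G.Adj] (Δ : ℕ) (hdeg : ∀ w : V, G.degree w ≤ Δ) :
    ∀ (n : ℕ) (u w : V), (G.finsetWalkLength n u w).card ≤ Δ ^ n := by
  intro n
  induction n with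
  | zero =>
    intro u w
    refine le_trans (Finset.card_le_one.mpr ?_) ?_
    · intro a ha b hb
      have ha' := SimpleGraph.Walk.eq_of_length_eq_zero (mem_finsetWalkLength_iff.mp ha)
      subst ha'
      have h1 := SimpleGraph.Walk.length_eq_zero_iff.mp (mem_finsetWalkLength_iff.mp ha)
      have h2 := SimpleGraph.Walk.length_eq_zero_iff.mp (mem_finsetWalkLength_iff.mp hb)
      rw [h1.eq_nil, h2.eq_nil]
    · simp
  | succ n ih =>
    intro u w
    calc (G.finsetWalkLength (n+1) u w).card
        ≤ ∑ x : G.neighborSet u, ((G.finsetWalkLength n x w).map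
            ⟨fun p => SimpleGraph.Walk.cons x.property p, fun _ _ => by intro h; cases h; rfl⟩).card := by
          exact Finset.card_biUnion_le
      _ ≤ ∑ _x : G.neighborSet u, Δ ^ n := by
          refine Finset.sum_le_sum fun x _ => ?_
          rw [Finset.card_map]; exact ih x w
      _ = G.degree u * Δ ^ n := by
          rw [Finset.sum_const, Finset.card_univ, G.card_neighborSet_eq_degree, smul_eq_mul]
      _ ≤ Δ * Δ ^ n := Nat.mul_le_mul_right _ (hdeg u)
      _ = Δ ^ (n + 1) := (pow_succ' Δ n).symm

/-- crossing lemma: a walk from inside `P` to outside `P` has an edge crossing `P`. -/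
private lemma crossing {V : Type*} {H : SimpleGraph V} {a b : V} (p : H.Walk a b)
    (P : Set V) (ha : a ∈ P) (hb : b ∉ P) :
    ∃ u w, u ∈ P ∧ w ∉ P ∧ H.Adj u w := by
  induction p with
  | nil => exact absurd ha hb
  | @cons x y z hxy q ih =>
    by_cases hy : y ∈ P
    · exact ih hy hb
    · exact ⟨x, y, ha, hy, hxy⟩

/-- extension lemma: insert a detour `u → w → u` into a closed walk through `u`. -/
private lemma extend_walk {V : Type*} [DecidableEq V] {G : SimpleGraph V} {v u w : V}
    (p : G.Walk v v) (hu : u ∈ p.support) (hadj : G.Adj u w) :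
    ∃ q : G.Walk v v, q.length = p.length + 2 ∧
      ∀ x, x ∈ q.support ↔ x ∈ p.support ∨ x = w := by
  classical
  set detour : G.Walk u u := SimpleGraph.Walk.cons hadj (SimpleGraph.Walk.cons hadj.symm .nil)
  refine ⟨(p.takeUntil u hu).append (detour.append (p.dropUntil u hu)), ?_, ?_⟩
  · have hsplit := p.take_spec hu
    have : (p.takeUntil u hu).length + (p.dropUntil u hu).length = p.length := by
      conv_rhs => rw [← hsplit]
      rw [SimpleGraph.Walk.length_append]
    simp only [SimpleGraph.Walk.length_append, SimpleGraph.Walk.length_cons,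
      SimpleGraph.Walk.length_nil, detour]
    omega
  · intro x
    have hsplit := p.take_spec hu
    have hmem : x ∈ p.support ↔ x ∈ (p.takeUntil u hu).support ∨ x ∈ (p.dropUntil u hu).support := by
      conv_lhs => rw [← hsplit]
      exact SimpleGraph.Walk.mem_support_append_iff _ _
    rw [SimpleGraph.Walk.mem_support_append_iff, SimpleGraph.Walk.mem_support_append_iff, hmem]
    have hdet : x ∈ detour.support ↔ x = u ∨ x = w := by
      simp [detour, SimpleGraph.Walk.support_cons]
      tauto
    have huT : u ∈ (p.takeUntil u hu).support := SimpleGraph.Walk.end_mem_support _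
    rw [hdet]
    constructor
    · rintro (h | (rfl | rfl) | h)
      · exact Or.inl (Or.inl h)
      · exact Or.inl (Or.inl huT)
      · exact Or.inr rfl
      · exact Or.inl (Or.inr h)
    · rintro ((h | h) | rfl)
      · exact Or.inl h
      · exact Or.inr (Or.inr h)
      · exact Or.inr (Or.inl (Or.inr rfl))

private lemma exists_spanning_walk {V : Type*} [Fintype V] [DecidableEq V] {G : SimpleGraph V}
    {v : V} {S : Finset V} (hv : v ∈ S) (hconn : (G.induce (↑S : Set V)).Connected) :
    ∃ p : G.Walk v v, p.length = 2 * (S.card - 1) ∧ p.support.toFinset = S := by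
  classical
  -- grow the walk one vertex at a time
  suffices h : ∀ d (T : Finset V) (p : G.Walk v v), T ⊆ S → p.support.toFinset = T →
      p.length = 2 * (T.card - 1) → S.card = T.card + d →
      ∃ q : G.Walk v v, q.length = 2 * (S.card - 1) ∧ q.support.toFinset = S by
    refine h (S.card - 1) {v} SimpleGraph.Walk.nil (by simpa using hv) ?_ (by simp) ?_
    · simp [SimpleGraph.Walk.support_nil]
    · have h1 : 1 ≤ S.card := Finset.card_pos.mpr ⟨v, hv⟩
      simp only [Finset.card_singleton]
      omega
  intro d
  induction d with
  | zero =>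
    intro T p hTS hsupp hlen hcard
    have : T = S := Finset.eq_of_subset_of_card_le hTS (by omega)
    subst this
    exact ⟨p, hlen, hsupp⟩
  | succ d ih =>
    intro T p hTS hsupp hlen hcard
    -- T ⊊ S, find a crossing edge
    have hvT : v ∈ T := by
      rw [← hsupp]; simpa using SimpleGraph.Walk.start_mem_support p
    have hne : ∃ x ∈ S, x ∉ T := by
      by_contra hall
      push_neg at hall
      have : S ⊆ T := hall
      have := Finset.card_le_card this
      omega
    obtain ⟨x, hxS, hxT⟩ := hne
    obtain ⟨wk⟩ := hconn.preconnected ⟨v, hv⟩ ⟨x, hxS⟩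
    obtain ⟨u', w', hu'P, hw'P, hadj'⟩ :=
      crossing wk {y : (↑S : Set V) | (y : V) ∈ T} (by simpa using hvT) (by simp [hxT])
    have hadj : G.Adj (u' : V) (w' : V) := by
      simpa using hadj'
    have hu'supp : (u' : V) ∈ p.support := by
      have : (u' : V) ∈ T := hu'P
      rw [← hsupp] at this
      simpa using this
    obtain ⟨q, hqlen, hqsupp⟩ := extend_walk p hu'supp hadj
    have hw'T : (w' : V) ∉ T := hw'P
    have hTcard : 1 ≤ T.card := Finset.card_pos.mpr ⟨v, hvT⟩
    refine ih (insert (w' : V) T) q (Finset.insert_subset w'.2 hTS) ?_ ?_ ?_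
    · ext y
      simp only [List.mem_toFinset, hqsupp, Finset.mem_insert]
      rw [← hsupp]
      simp [List.mem_toFinset]
      tauto
    · rw [Finset.card_insert_of_notMem hw'T]
      omega
    · rw [Finset.card_insert_of_notMem hw'T]
      omega

theorem stmt_16 {V : Type*} [Fintype V] [DecidableEq V] (G : SimpleGraph V)
    [DecidableRel G.Adj] (Δ : ℕ) (hΔ : 1 ≤ Δ) (hdeg : ∀ w : V, G.degree w ≤ Δ)
    (v : V) (ℓ : ℕ) (hℓ : 2 ≤ ℓ) :
    (Nat.card {S : Finset V | S.card = ℓ ∧ v ∈ S ∧ (G.induce (↑S : Set V)).Connected} : ℝ) ≤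
      (Real.exp 1 * (Δ : ℝ) ^ 2) ^ (ℓ - 1) / 2 := by
  classical
  set n := 2 * (ℓ - 1) with hn
  -- injection into closed walks of length n
  have key : Nat.card {S : Finset V | S.card = ℓ ∧ v ∈ S ∧ (G.induce (↑S : Set V)).Connected}
      ≤ Δ ^ n := by
    have hinj : ∃ f : {S : Finset V | S.card = ℓ ∧ v ∈ S ∧ (G.induce (↑S : Set V)).Connected} →
        {p : G.Walk v v // p.length = n}, Function.Injective f := by
      have hex : ∀ S : {S : Finset V | S.card = ℓ ∧ v ∈ S ∧ (G.induce (↑S : Set V)).Connected},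
          ∃ p : G.Walk v v, p.length = n ∧ p.support.toFinset = (S : Finset V) := by
        rintro ⟨S, hScard, hvS, hconn⟩
        obtain ⟨p, hplen, hpsupp⟩ := exists_spanning_walk hvS hconn
        exact ⟨p, by rw [hplen, hScard], hpsupp⟩
      choose f hf1 hf2 using hex
      refine ⟨fun S => ⟨f S, hf1 S⟩, ?_⟩
      intro S₁ S₂ h
      have : f S₁ = f S₂ := congrArg Subtype.val h
      have hsupp : (S₁ : Finset V) = (S₂ : Finset V) := by
        rw [← hf2 S₁, ← hf2 S₂, this]
      exact Subtype.ext hsupp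
    obtain ⟨f, hf⟩ := hinj
    calc Nat.card {S : Finset V | S.card = ℓ ∧ v ∈ S ∧ (G.induce (↑S : Set V)).Connected}
        ≤ Nat.card {p : G.Walk v v // p.length = n} := Nat.card_le_card_of_injective f hf
      _ = Fintype.card {p : G.Walk v v // p.length = n} := Nat.card_eq_fintype_card
      _ = (G.finsetWalkLength n v v).card := G.card_set_walk_length_eq v v n
      _ ≤ Δ ^ n := walk_count_le G Δ hdeg n v v
  -- now the real-number estimate
  have h2 : (2 : ℝ) ≤ Real.exp 1 := by
    have := Real.add_one_le_exp 1
    linarith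
  have hexp : (2 : ℝ) ≤ Real.exp 1 ^ (ℓ - 1) := by
    calc (2 : ℝ) ≤ Real.exp 1 := h2
      _ ≤ Real.exp 1 ^ (ℓ - 1) := le_self_pow₀ (by linarith) (by omega)
  have hΔpos : (0 : ℝ) ≤ (Δ : ℝ) ^ n := by positivity
  calc (Nat.card {S : Finset V | S.card = ℓ ∧ v ∈ S ∧ (G.induce (↑S : Set V)).Connected} : ℝ)
      ≤ ((Δ : ℕ) ^ n : ℕ) := by exact_mod_cast key
    _ = (Δ : ℝ) ^ n := by push_cast; ring
    _ ≤ (Real.exp 1 ^ (ℓ - 1) * (Δ : ℝ) ^ n) / 2 := by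
        rw [le_div_iff₀ (by norm_num : (0:ℝ) < 2)]
        calc (Δ : ℝ) ^ n * 2 = 2 * (Δ : ℝ) ^ n := by ring
          _ ≤ Real.exp 1 ^ (ℓ - 1) * (Δ : ℝ) ^ n := by
              exact mul_le_mul_of_nonneg_right hexp hΔpos
    _ = (Real.exp 1 * (Δ : ℝ) ^ 2) ^ (ℓ - 1) / 2 := by
        rw [mul_pow, ← pow_mul, hn, Nat.mul_comm]
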